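/- If for 2×2 channels C and D with trade-off points (α_C, β_C), (α_D, β_D) we have β_C/(1-α_C) ≤ β_D/(1-α_D) and (1-β_C)/α_C ≥ (1-β_D)/α_D, then there exists a 2×2 row-stochastic matrix W such that C·W = D (i.e., C refines to D). -/

import Mathlib

set_option maxHeartbeats 1000000 in
/-- If the posterior-ratio inequalities hold between the trade-off points of two 2×2
channels `C` and `D`, then there exists a row-stochastic matrix `W` with `C * W = D`. -/
theorem refinement_of_ratio_ineqs (αC βC αD βD : ℝ)
    (hαC : αC ∈ Set.Ioo (0 : ℝ) 1) (hβC : βC ∈ Set.Ioo (0 : ℝ) 1)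
    (hαD : αD ∈ Set.Ioo (0 : ℝ) 1) (hβD : βD ∈ Set.Ioo (0 : ℝ) 1)
    (hC : βC ≤ 1 - αC) (hD : βD ≤ 1 - αD)
    (h1 : βC / (1 - αC) ≤ βD / (1 - αD))
    (h2 : (1 - βC) / αC ≥ (1 - βD) / αD) :
    ∃ W : Matrix (Fin 2) (Fin 2) ℝ,
      (∀ i j, 0 ≤ W i j) ∧ (∀ i, ∑ j, W i j = 1) ∧
        (!![1 - αC, αC; βC, 1 - βC] : Matrix (Fin 2) (Fin 2) ℝ) * W
          = !![1 - αD, αD; βD, 1 - βD] := by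
  obtain ⟨hαC0, hαC1⟩ := hαC
  obtain ⟨hβC0, hβC1⟩ := hβC
  obtain ⟨hαD0, hαD1⟩ := hαD
  obtain ⟨hβD0, hβD1⟩ := hβD
  have h1aC : (0:ℝ) < 1 - αC := by linarith
  have h1aD : (0:ℝ) < 1 - αD := by linarith
  have h1bC : (0:ℝ) < 1 - βC := by linarith
  have h1bD : (0:ℝ) < 1 - βD := by linarith
  have k1 : βC * (1 - αD) ≤ βD * (1 - αC) := by
    rw [div_le_div_iff₀ h1aC h1aD] at h1; linarith
  have k2 : (1 - βD) * αC ≤ (1 - βC) * αD := by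
    rw [ge_iff_le, div_le_div_iff₀ hαD0 hαC0] at h2; linarith
  rcases eq_or_lt_of_le hC with heq | hd
  · -- degenerate case: βC = 1 - αC
    have hDeq : βD = 1 - αD := by nlinarith
    refine ⟨!![1 - αD, αD; 1 - αD, αD], ?_, ?_, ?_⟩
    · intro i j
      fin_cases i <;> fin_cases j <;> simp <;> linarith
    · intro i
      fin_cases i <;> simp [Fin.sum_univ_two] <;> ring
    · ext i j
      fin_cases i <;> fin_cases j <;>
        simp [Matrix.mul_apply, Fin.sum_univ_two] <;> nlinarith
  · -- nondegenerate case: det = 1 - αC - βC > 0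
    set d : ℝ := 1 - αC - βC with hd_def
    have hd0 : 0 < d := by simp [hd_def]; linarith
    have hdne : d ≠ 0 := ne_of_gt hd0
    refine ⟨!![((1-βC)*(1-αD) - αC*βD)/d, ((1-βC)*αD - αC*(1-βD))/d;
              ((1-αC)*βD - βC*(1-αD))/d, ((1-αC)*(1-βD) - βC*αD)/d], ?_, ?_, ?_⟩
    · intro i j
      fin_cases i <;> fin_cases j <;> simp <;>
        refine div_nonneg ?_ hd0.le <;> nlinarith
    · intro i
      fin_cases i <;> simp [Fin.sum_univ_two] <;> rw [← add_div, div_eq_one_iff_eq hdne] <;> ring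
    · ext i j
      fin_cases i <;> fin_cases j <;>
        simp [Matrix.mul_apply, Fin.sum_univ_two] <;>
        rw [← mul_div_assoc, ← mul_div_assoc, ← add_div, div_eq_iff hdne] <;> ring
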